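/- Let f : Lⁿ → L be an n-ary function on a complete lattice that is continuous in each coordinate, and let h : L → L be monotone. If h is contextual w.r.t. f, then the least closure h* above h is also contextual w.r.t. f. -/
import Mathlib


def IsClosure {L : Type*} [CompleteLattice L] (c : L → L) : Prop :=
  Monotone c ∧ (∀ x, x ≤ c x) ∧ (∀ x, c (c x) ≤ c x)

def IsLeastClosureAbove {L : Type*} [CompleteLattice L] (k c : L → L) : Prop :=
  IsClosure c ∧ (∀ x, k x ≤ c x) ∧
    ∀ d, IsClosure d → (∀ x, k x ≤ d x) → ∀ x, c x ≤ d x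

/-- If f is continuous in each coordinate and h is contextual w.r.t. f,
then so is the least closure h* above h. -/
theorem stmt5 {L : Type*} [CompleteLattice L] {n : ℕ}
    (f : (Fin n → L) → L)
    (hfcont : ∀ (x : Fin n → L) (i : Fin n) (S : Set L),
      f (Function.update x i (sSup S)) = ⨆ y ∈ S, f (Function.update x i y))
    (h hs : L → L) (hh : Monotone h)
    (hctx : ∀ (x : Fin n → L) (i : Fin n), f (Function.update x i (h (x i))) ≤ h (f x))
    (hhs : IsLeastClosureAbove h hs) :
    ∀ (x : Fin n → L) (i : Fin n), f (Function.update x i (hs (x i))) ≤ hs (f x) := by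
  obtain ⟨⟨hsmono, hsle, hsidem⟩, hshs, hsleast⟩ := hhs
  -- h ≤ hs
  have hle_hs : ∀ y, h y ≤ hs y := hshs
  -- monotonicity of f in each coordinate
  have fmono : ∀ (x : Fin n → L) (i : Fin n) (a b : L), a ≤ b →
      f (Function.update x i a) ≤ f (Function.update x i b) := by
    intro x i a b hab
    have h1 : sSup ({a, b} : Set L) = b := by
      simp [sSup_insert, sup_eq_right.2 hab]
    have h2 := hfcont x i ({a, b} : Set L)
    rw [h1] at h2
    rw [h2]
    exact le_iSup₂ (f := fun y _ => f (Function.update x i y)) a (by simp)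
  -- we show: for any m with x ≤ m and h m ≤ m, hs x ≤ m.
  have hs_min : ∀ (z m : L), z ≤ m → h m ≤ m → hs z ≤ m := by
    intro z m hzm hhm
    -- c y = sInf {w | y ≤ w ∧ h w ≤ w} is a closure above h, so hs ≤ c, and c z ≤ m
    set c : L → L := fun y => sInf {w | y ≤ w ∧ h w ≤ w} with hc
    have hyc : ∀ y, y ≤ c y := fun y => le_sInf fun w hw => hw.1
    have hcmono : Monotone c := fun a b hab =>
      sInf_le_sInf fun w hw => ⟨hab.trans hw.1, hw.2⟩
    have hhc : ∀ y, h (c y) ≤ c y := by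
      intro y
      refine le_sInf fun w hw => ?_
      exact (hh (sInf_le hw)).trans hw.2
    have hcc : ∀ y, c (c y) ≤ c y := fun y => sInf_le ⟨le_rfl, hhc y⟩
    have hhlec : ∀ y, h y ≤ c y := fun y => (hh (hyc y)).trans (hhc y)
    have := hsleast c ⟨hcmono, hyc, hcc⟩ hhlec z
    exact this.trans (sInf_le ⟨hzm, hhm⟩)
  intro x i
  set T : Set L := {s | f (Function.update x i s) ≤ hs (f x)} with hT
  set m : L := sSup T with hm
  have hmT : m ∈ T := by
    show f (Function.update x i (sSup T)) ≤ hs (f x)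
    rw [hfcont x i T]
    exact iSup₂_le fun s hs' => hs'
  have hxiT : x i ∈ T := by
    show f (Function.update x i (x i)) ≤ hs (f x)
    rw [Function.update_eq_self]
    exact hsle (f x)
  have hhmT : h m ∈ T := by
    show f (Function.update x i (h m)) ≤ hs (f x)
    have h1 := hctx (Function.update x i m) i
    rw [Function.update_self, Function.update_idem] at h1
    calc f (Function.update x i (h m)) ≤ h (f (Function.update x i m)) := h1
      _ ≤ h (hs (f x)) := hh hmT
      _ ≤ hs (hs (f x)) := hle_hs _
      _ ≤ hs (f x) := hsidem _
  have h1 : hs (x i) ≤ m := hs_min (x i) m (le_sSup hxiT) (le_sSup hhmT)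
  exact (fmono x i _ m h1).trans hmT
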